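/- arXiv:1212.4797 — 5 statements merged into one kernel-verified Lean document; each statement's English description precedes it below -/
import Mathlib

section
/- Let T be a tree on vertex set V, let v be a vertex with an edge to u, and suppose swapping edge vu to vw (where u and w lie in the component B of T minus edge vu not containing v) strictly decreases v's eccentricity. Let A be the component of T minus edge vu containing v. Then for every vertex x in A, no vertex y in A attains x's eccentricity, i.e., for all x, y in A, d_T(x,y) < ecc_T(x). -/
namespace NCG
open SimpleGraph

variable {V : Type*}

/-- Eccentricity of a vertex: maximum graph distance to any other vertex. -/
noncomputable def ecc [Fintype V] (G : SimpleGraph V) (x : V) : ℕ :=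
  Finset.univ.sup fun y => G.dist x y

/-- Diameter: maximum eccentricity. -/
noncomputable def diam [Fintype V] (G : SimpleGraph V) : ℕ :=
  Finset.univ.sup fun x => ecc G x

/-- Radius: minimum eccentricity. -/
noncomputable def rad [Fintype V] (G : SimpleGraph V) : ℕ :=
  sInf (Set.range (ecc G))

/-- after an improving eccentricity swap of edge vu to vw (u, w in
component B), every vertex x in the component A of T − vu containing v has its
eccentricity realized outside A: for all x, y in A, d_T(x,y) < ecc_T(x). -/
theorem stmt0 [Fintype V] [DecidableEq V] (T : SimpleGraph V) (hT : T.IsTree)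
    (v u w : V) (hvu : T.Adj v u)
    (hw : (T.deleteEdges {s(v, u)}).Reachable u w)
    (T' : SimpleGraph V)
    (hT'edges : T'.edgeSet = (T.edgeSet \ {s(v, u)}) ∪ {s(v, w)})
    (himp : ecc T' v < ecc T v) :
    ∀ x y : V, (T.deleteEdges {s(v, u)}).Reachable v x →
      (T.deleteEdges {s(v, u)}).Reachable v y →
      T.dist x y < ecc T x := by
  intro x y hx hy
  set G := T.deleteEdges {s(v, u)} with hGdef
  -- the edge vu is a bridge of T
  have hbr : ¬ G.Reachable v u := by
    have := (isAcyclic_iff_forall_adj_isBridge.mp hT.IsAcyclic) hvu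
    rw [isBridge_iff] at this
    exact this
  have hPw : ¬ G.Reachable v w := fun h => hbr (h.trans hw.symm)
  have hGleT : G ≤ T := T.deleteEdges_le _
  have hGedge : G.edgeSet = T.edgeSet \ {s(v, u)} := T.edgeSet_deleteEdges _
  have hGleT' : G ≤ T' := by
    rw [← edgeSet_subset_edgeSet, hGedge, hT'edges]
    exact Set.subset_union_left
  -- key walk lemma: T'-walks into A can be replaced by G-walks
  have key : ∀ {a b : V} (p : T'.Walk a b), G.Reachable v b →
      (G.Reachable v a → ∃ q : G.Walk a b, q.length ≤ p.length) ∧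
      (¬ G.Reachable v a → ∃ q : G.Walk v b, q.length < p.length) := by
    intro a b p
    induction p with
    | nil =>
      intro hb
      exact ⟨fun _ => ⟨Walk.nil, le_refl _⟩, fun ha => absurd hb ha⟩
    | @cons a c b h p ih =>
      intro hb
      have he : s(a, c) ∈ T'.edgeSet := h
      rw [hT'edges] at he
      rcases he with he | he
      · -- a G-edge
        have hac : G.Adj a c := by rw [← mem_edgeSet, hGedge]; exact he
        constructor
        · intro ha
          obtain ⟨q, hq⟩ := (ih hb).1 (ha.trans hac.reachable)
          exact ⟨Walk.cons hac q, by simpa using Nat.add_le_add_right hq 1⟩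
        · intro ha
          have hc : ¬ G.Reachable v c := fun hc => ha (hc.trans hac.reachable.symm)
          obtain ⟨q, hq⟩ := (ih hb).2 hc
          exact ⟨q, by simpa using Nat.lt_succ_of_lt hq⟩
      · -- the new edge vw
        simp only [Set.mem_singleton_iff, Sym2.eq, Sym2.rel_iff', Prod.mk.injEq,
          Prod.swap_prod_mk] at he
        rcases he with ⟨h1, h2⟩ | ⟨h1, h2⟩ <;> subst h1 <;> subst h2
        · -- a = v, c = w
          constructor
          · intro _
            obtain ⟨q, hq⟩ := (ih hb).2 hPw
            exact ⟨q, by simpa using Nat.le_succ_of_le hq.le⟩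
          · intro ha
            exact absurd (Reachable.refl a) ha
        · -- a = w, c = v
          constructor
          · intro ha
            exact absurd ha hPw
          · intro _
            obtain ⟨q, hq⟩ := (ih hb).1 (Reachable.refl c)
            exact ⟨q, by simpa using Nat.lt_succ_of_le hq⟩
  -- Step A: every vertex of A is strictly closer to v than ecc T v
  have starA : ∀ z : V, G.Reachable v z → T.dist v z < ecc T v := by
    intro z hz
    have h1 : T'.Reachable v z := hz.mono hGleT'
    obtain ⟨p, hp⟩ := h1.exists_walk_length_eq_dist
    obtain ⟨q, hq⟩ := (key p hz).1 (Reachable.refl v)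
    have h2 : T.dist v z ≤ (q.mapLe hGleT).length := T.dist_le _
    rw [Walk.length_map] at h2
    calc T.dist v z ≤ q.length := h2
      _ ≤ p.length := hq
      _ = T'.dist v z := hp
      _ ≤ ecc T' v := Finset.le_sup (Finset.mem_univ z)
      _ < ecc T v := himp
  -- choose b attaining ecc T v
  have : Nonempty V := ⟨v⟩
  obtain ⟨b, -, hbmax⟩ := Finset.exists_mem_eq_sup Finset.univ Finset.univ_nonempty
    (fun z => T.dist v z)
  have hbecc : ecc T v = T.dist v b := hbmax
  have hbB : ¬ G.Reachable v b := fun hb => absurd (hbecc ▸ starA b hb) (lt_irrefl _)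
  -- every T-walk from x to b passes through v
  have hTc : T.Connected := hT.isConnected
  obtain ⟨p, hp⟩ := (hTc x b).exists_walk_length_eq_dist
  have hvp : v ∈ p.support := by
    by_contra hvp
    have hedges : ∀ e ∈ p.edges, e ∈ G.edgeSet := by
      intro e hep
      rw [hGedge]
      refine ⟨p.edges_subset_edgeSet hep, ?_⟩
      rintro rfl
      exact hvp (p.fst_mem_support_of_mem_edges hep)
    exact hbB (hx.trans ⟨p.transfer G hedges⟩)
  -- split the walk at v
  have hsplit : T.dist x v + T.dist v b ≤ T.dist x b := by
    have := congrArg Walk.length (p.take_spec hvp)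
    rw [Walk.length_append] at this
    calc T.dist x v + T.dist v b
        ≤ (p.takeUntil v hvp).length + (p.dropUntil v hvp).length :=
          Nat.add_le_add (T.dist_le _) (T.dist_le _)
      _ = p.length := this
      _ = T.dist x b := hp
  calc T.dist x y ≤ T.dist x v + T.dist v y := hTc.dist_triangle
    _ < T.dist x v + ecc T v := Nat.add_lt_add_left (starA y hy) _
    _ = T.dist x v + T.dist v b := by rw [hbecc]
    _ ≤ T.dist x b := hsplit
    _ ≤ ecc T x := Finset.le_sup (Finset.mem_univ b)

end NCG
end

section
/- Let T be a tree, and suppose vertex v performs an improving swap of edge vu to vw (decreasing its eccentricity), producing tree T'. Let A be the component of T minus edge vu containing v. Then every vertex x in A has strictly smaller eccentricity in T' than in T. -/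
namespace NCG
open SimpleGraph

variable {V : Type*}

private lemma dist_triangle' {G : SimpleGraph V} {a b c : V}
    (h1 : G.Reachable a b) (h2 : G.Reachable b c) :
    G.dist a c ≤ G.dist a b + G.dist b c := by
  obtain ⟨p, hp⟩ := h1.exists_walk_length_eq_dist
  obtain ⟨q, hq⟩ := h2.exists_walk_length_eq_dist
  rw [← hp, ← hq, ← Walk.length_append]
  apply dist_le

/-- Core induction: lower bounds on lengths of walks in `K` in terms of
distances in a subgraph `G` obtained by removing the bridge `{a,b}`. -/
private lemma core {K G : SimpleGraph V} {a b : V}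
    (hadj : ∀ x y, K.Adj x y → s(x, y) ≠ s(a, b) → G.Adj x y)
    (hbr : ¬ G.Reachable a b) :
    ∀ {s t : V} (p : K.Walk s t),
      (G.Reachable a s → G.Reachable a t → G.dist s t ≤ p.length) ∧
      (G.Reachable a s → G.Reachable b t →
        G.dist s a + 1 + G.dist b t ≤ p.length) ∧
      (G.Reachable b s → G.Reachable a t →
        G.dist s b + 1 + G.dist a t ≤ p.length) ∧
      (G.Reachable b s → G.Reachable b t → G.dist s t ≤ p.length) := by
  intro s t p
  induction p with
  | nil =>
    refine ⟨fun h1 h2 => by simp [SimpleGraph.dist_self],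
      fun h1 h2 => absurd (h1.trans h2.symm) hbr,
      fun h1 h2 => absurd (h2.trans h1.symm) hbr,
      fun h1 h2 => by simp [SimpleGraph.dist_self]⟩
  | @cons s c t h q ih =>
    obtain ⟨ih1, ih2, ih3, ih4⟩ := ih
    by_cases he : s(s, c) = s(a, b)
    · rw [Sym2.eq_iff] at he
      rcases he with ⟨rfl, rfl⟩ | ⟨rfl, rfl⟩
      · -- s = a, c = b
        refine ⟨fun h1 h2 => ?_, fun h1 h2 => ?_,
          fun h1 h2 => absurd h1.symm hbr, fun h1 h2 => absurd h1.symm hbr⟩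
        · have := ih3 (Reachable.refl _) h2
          simp only [SimpleGraph.dist_self] at this
          simp only [Walk.length_cons]
          omega
        · have := ih4 (Reachable.refl _) h2
          simp only [SimpleGraph.dist_self, Walk.length_cons]
          omega
      · -- s = b, c = a
        refine ⟨fun h1 h2 => absurd h1 hbr, fun h1 h2 => absurd h1 hbr,
          fun h1 h2 => ?_, fun h1 h2 => ?_⟩
        · have := ih1 (Reachable.refl _) h2
          simp only [SimpleGraph.dist_self] at this ⊢
          simp only [Walk.length_cons]
          omega
        · have := ih2 (Reachable.refl _) h2
          simp only [SimpleGraph.dist_self] at this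
          simp only [Walk.length_cons]
          omega
    · have hGsc : G.Adj s c := hadj _ _ h he
      have hdsc : G.dist s c ≤ 1 := by
        have := SimpleGraph.dist_le (Walk.cons hGsc Walk.nil)
        simpa using this
      refine ⟨fun h1 h2 => ?_, fun h1 h2 => ?_, fun h1 h2 => ?_, fun h1 h2 => ?_⟩
      · have hc : G.Reachable a c := h1.trans hGsc.reachable
        have := ih1 hc h2
        have htri : G.dist s t ≤ G.dist s c + G.dist c t :=
          dist_triangle' hGsc.reachable (hc.symm.trans h2)
        simp only [Walk.length_cons]
        omega
      · have hc : G.Reachable a c := h1.trans hGsc.reachable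
        have := ih2 hc h2
        have htri : G.dist s a ≤ G.dist s c + G.dist c a :=
          dist_triangle' hGsc.reachable hc.symm
        simp only [Walk.length_cons]
        omega
      · have hc : G.Reachable b c := h1.trans hGsc.reachable
        have := ih3 hc h2
        have htri : G.dist s b ≤ G.dist s c + G.dist c b :=
          dist_triangle' hGsc.reachable hc.symm
        simp only [Walk.length_cons]
        omega
      · have hc : G.Reachable b c := h1.trans hGsc.reachable
        have := ih4 hc h2
        have htri : G.dist s t ≤ G.dist s c + G.dist c t :=
          dist_triangle' hGsc.reachable (hc.symm.trans h2)
        simp only [Walk.length_cons]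
        omega

/-- Distance formulas for a graph `K` with bridge `{a,b}` and
bridgeless part `G`. -/
private lemma dist_split {K G : SimpleGraph V} {a b : V}
    (hab : K.Adj a b) (hsub : G ≤ K)
    (hadj : ∀ x y, K.Adj x y → s(x, y) ≠ s(a, b) → G.Adj x y)
    (hbr : ¬ G.Reachable a b) :
    (∀ x y, G.Reachable a x → G.Reachable a y → K.dist x y = G.dist x y) ∧
    (∀ x y, G.Reachable a x → G.Reachable b y →
      K.dist x y = G.dist x a + 1 + G.dist b y) := by
  constructor
  · intro x y hx hy
    have hrG : G.Reachable x y := hx.symm.trans hy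
    obtain ⟨p, hp⟩ := hrG.exists_walk_length_eq_dist
    have hle : K.dist x y ≤ G.dist x y := by
      have := SimpleGraph.dist_le (p.mapLe hsub)
      simpa [hp] using this
    have hrK : K.Reachable x y := ⟨p.mapLe hsub⟩
    obtain ⟨q, hq⟩ := hrK.exists_walk_length_eq_dist
    have hge := (core hadj hbr q).1 hx hy
    omega
  · intro x y hx hy
    obtain ⟨p, hp⟩ := hx.symm.exists_walk_length_eq_dist
    obtain ⟨q, hq⟩ := hy.exists_walk_length_eq_dist
    have hle : K.dist x y ≤ G.dist x a + 1 + G.dist b y := by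
      have := SimpleGraph.dist_le ((p.mapLe hsub).append (Walk.cons hab (q.mapLe hsub)))
      simp only [Walk.length_append, Walk.length_cons, Walk.length_map] at this
      rw [hp, hq] at this
      omega
    have hrK : K.Reachable x y := ⟨(p.mapLe hsub).append (Walk.cons hab (q.mapLe hsub))⟩
    obtain ⟨r, hr⟩ := hrK.exists_walk_length_eq_dist
    have hge := (core hadj hbr r).2.1 hx hy
    omega

/-- an improving swap strictly decreases the eccentricity of every
vertex in the component A of T − vu containing v. -/
theorem stmt1 [Fintype V] [DecidableEq V] (T : SimpleGraph V) (hT : T.IsTree)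
    (v u w : V) (hvu : T.Adj v u)
    (hw : (T.deleteEdges {s(v, u)}).Reachable u w)
    (T' : SimpleGraph V) (hT't : T'.IsTree)
    (hT'edges : T'.edgeSet = (T.edgeSet \ {s(v, u)}) ∪ {s(v, w)})
    (himp : ecc T' v < ecc T v) :
    ∀ x : V, (T.deleteEdges {s(v, u)}).Reachable v x → ecc T' x < ecc T x := by
  set G := T.deleteEdges {s(v, u)} with hGdef
  have hGsub : G ≤ T := deleteEdges_le _
  have hGadj : ∀ x y, T.Adj x y → s(x, y) ≠ s(v, u) → G.Adj x y := by
    intro x y h hne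
    exact deleteEdges_adj.mpr ⟨h, by simpa using hne⟩
  -- the edge vu is a bridge of the tree T
  have hbr : ¬ G.Reachable v u := by
    have hbridge := isAcyclic_iff_forall_edge_isBridge.mp hT.IsAcyclic
      ((mem_edgeSet T).mpr hvu)
    exact isBridge_iff.mp hbridge
  -- every vertex is on one of the two sides
  have hpart : ∀ y : V, G.Reachable v y ∨ G.Reachable u y := by
    intro y
    obtain ⟨p⟩ := hT.isConnected v y
    have key : ∀ {s t : V} (p : T.Walk s t),
        (G.Reachable v s ∨ G.Reachable u s) →
        (G.Reachable v t ∨ G.Reachable u t) := by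
      intro s t p
      induction p with
      | nil => exact id
      | @cons s c t h q ih =>
        intro hs
        apply ih
        by_cases he : s(s, c) = s(v, u)
        · rw [Sym2.eq_iff] at he
          rcases he with ⟨rfl, rfl⟩ | ⟨rfl, rfl⟩
          · exact Or.inr (Reachable.refl _)
          · exact Or.inl (Reachable.refl _)
        · have hGsc : G.Adj s c := hGadj _ _ h he
          rcases hs with hs | hs
          · exact Or.inl (hs.trans hGsc.reachable)
          · exact Or.inr (hs.trans hGsc.reachable)
    exact key p (Or.inl (Reachable.refl v))
  -- v is not G-reachable to w either
  have hbw : ¬ G.Reachable v w := fun h => hbr (h.trans hw.symm)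
  -- v and w adjacent in T'
  have hvw : T'.Adj v w := by
    rw [← mem_edgeSet, hT'edges]
    exact Set.mem_union_right _ rfl
  -- T' minus vw equals G
  have hnotT : s(v, w) ∉ T.edgeSet \ {s(v, u)} := by
    rintro ⟨hmem, hne⟩
    exact hbw (hGadj _ _ ((mem_edgeSet T).mp hmem) (by simpa using hne)).reachable
  have hG'eq : T'.deleteEdges {s(v, w)} = G := by
    apply edgeSet_inj.mp
    rw [edgeSet_deleteEdges, hT'edges, Set.union_diff_right,
      Set.diff_singleton_eq_self hnotT, hGdef, edgeSet_deleteEdges]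
  have hG'sub : G ≤ T' := hG'eq ▸ deleteEdges_le _
  have hG'adj : ∀ x y, T'.Adj x y → s(x, y) ≠ s(v, w) → G.Adj x y := by
    intro x y h hne
    rw [← hG'eq]
    exact deleteEdges_adj.mpr ⟨h, by simpa using hne⟩
  obtain ⟨TA, TAB⟩ := dist_split hvu hGsub hGadj hbr
  obtain ⟨T'A, T'AB⟩ := dist_split hvw hG'sub hG'adj hbw
  -- choose y₀ realizing ecc T v
  obtain ⟨y₀, -, hy₀⟩ := Finset.exists_mem_eq_sup (Finset.univ : Finset V)
    ⟨v, Finset.mem_univ v⟩ (fun y => T.dist v y)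
  have heccv : ecc T v = T.dist v y₀ := hy₀
  have hy₀B : G.Reachable u y₀ := by
    rcases hpart y₀ with h | h
    · exfalso
      have h1 : T.dist v y₀ = G.dist v y₀ := TA v y₀ (Reachable.refl v) h
      have h2 : T'.dist v y₀ = G.dist v y₀ := T'A v y₀ (Reachable.refl v) h
      have h3 : T'.dist v y₀ ≤ ecc T' v := Finset.le_sup (Finset.mem_univ y₀)
      omega
    · exact h
  have heccv' : ecc T v = 1 + G.dist u y₀ := by
    have := TAB v y₀ (Reachable.refl v) hy₀B
    simp only [SimpleGraph.dist_self] at this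
    omega
  have hlt : ecc T' v ≤ G.dist u y₀ := by omega
  -- key bounds
  have K1 : ∀ y, G.Reachable v y → G.dist v y ≤ G.dist u y₀ := by
    intro y hy
    have h1 : T'.dist v y = G.dist v y := T'A v y (Reachable.refl v) hy
    have h2 : T'.dist v y ≤ ecc T' v := Finset.le_sup (Finset.mem_univ y)
    omega
  have K2 : ∀ y, G.Reachable u y → 1 + G.dist w y ≤ G.dist u y₀ := by
    intro y hy
    have h1 : T'.dist v y = 1 + G.dist w y := by
      have := T'AB v y (Reachable.refl v) (hw.symm.trans hy)
      simp only [SimpleGraph.dist_self] at this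
      omega
    have h2 : T'.dist v y ≤ ecc T' v := Finset.le_sup (Finset.mem_univ y)
    omega
  intro x hx
  have hxlow : T.dist x y₀ = G.dist x v + 1 + G.dist u y₀ := TAB x y₀ hx hy₀B
  have heccx : G.dist x v + 1 + G.dist u y₀ ≤ ecc T x := by
    rw [← hxlow]
    exact Finset.le_sup (Finset.mem_univ y₀)
  rw [ecc]
  rw [Finset.sup_lt_iff (by simp only [bot_eq_zero']; omega : ⊥ < ecc T x)]
  intro y _
  rcases hpart y with hy | hy
  · have h1 : T'.dist x y = G.dist x y := T'A x y hx hy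
    have h2 : G.dist x y ≤ G.dist x v + G.dist v y := dist_triangle' hx.symm hy
    have h3 := K1 y hy
    omega
  · have h1 : T'.dist x y = G.dist x v + 1 + G.dist w y := T'AB x y hx (hw.symm.trans hy)
    have h2 := K2 y hy
    omega

end NCG
end

section
/- Let T be a tree, and suppose vertex v performs an improving swap of edge vu to vw, producing tree T'. Let A be the component of T minus edge vu containing v and B the other component. If x ∈ A and y ∈ B satisfy d_{T'}(x,y) = ecc_{T'}(y), then ecc_T(x) > ecc_{T'}(y). That is, the new eccentricity of any vertex in B whose eccentricity is realized across the swapped edge is strictly less than the old eccentricity of the corresponding vertex in A. -/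
namespace NCG
open SimpleGraph

variable {V : Type*}

private lemma dist_le_ecc [Fintype V] (G : SimpleGraph V) (x y : V) : G.dist x y ≤ ecc G x :=
  Finset.le_sup (Finset.mem_univ y)

private lemma edge_mem_of_not_reachable {G : SimpleGraph V} {e : Sym2 V} {x y : V}
    (hr : ¬(G.deleteEdges {e}).Reachable x y) (p : G.Walk x y) : e ∈ p.edges := by
  by_contra h
  exact hr ⟨p.toDeleteEdge e h⟩

/-- From a path starting at `a` that uses the edge `s(a,c)`, extract a walk from `c`
to the endpoint that avoids this edge. -/
private lemma drop_edge {G : SimpleGraph V} [DecidableEq V] {a c z : V} (p : G.Walk a z)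
    (hp : p.IsPath) (h : s(a, c) ∈ p.edges) :
    ∃ q : G.Walk c z, s(a, c) ∉ q.edges := by
  have hc : c ∈ p.support := p.snd_mem_support_of_mem_edges h
  have hne : a ≠ c := (p.adj_of_mem_edges h).ne
  refine ⟨p.dropUntil c hc, fun hq => ?_⟩
  have haq : a ∈ (p.dropUntil c hc).support :=
    (p.dropUntil c hc).fst_mem_support_of_mem_edges hq
  have hnodup : ((p.takeUntil c hc).support ++ (p.dropUntil c hc).support.tail).Nodup := by
    rw [← Walk.support_append, p.take_spec hc]
    exact hp.support_nodup
  have hdisj := List.disjoint_of_nodup_append hnodup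
  have ha1 : a ∈ (p.takeUntil c hc).support := Walk.start_mem_support _
  have ha2 : a ∈ (p.dropUntil c hc).support.tail := by
    rw [Walk.support_eq_cons] at haq
    cases haq with
    | head => exact absurd rfl hne
    | tail _ h' => exact h'
  exact hdisj ha1 ha2

/-- If a walk of minimal length passes through `a`, the distance splits at `a`. -/
private lemma dist_split_s2 {G : SimpleGraph V} [DecidableEq V] {x y a : V} (p : G.Walk x y)
    (hl : p.length = G.dist x y) (ha : a ∈ p.support) :
    G.dist x y = G.dist x a + G.dist a y := by
  refine le_antisymm ?_ ?_
  · obtain ⟨q1, h1⟩ := SimpleGraph.Reachable.exists_walk_length_eq_dist ⟨p.takeUntil a ha⟩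
    obtain ⟨q2, h2⟩ := SimpleGraph.Reachable.exists_walk_length_eq_dist ⟨p.dropUntil a ha⟩
    calc G.dist x y ≤ (q1.append q2).length := SimpleGraph.dist_le _
      _ = _ := by rw [Walk.length_append, h1, h2]
  · calc G.dist x a + G.dist a y
        ≤ (p.takeUntil a ha).length + (p.dropUntil a ha).length :=
          Nat.add_le_add (SimpleGraph.dist_le _) (SimpleGraph.dist_le _)
      _ = p.length := by rw [← Walk.length_append, p.take_spec ha]
      _ = _ := hl

/-- A path starting at `a` avoids the edge `s(a,c)` if its endpoint is not reachable
from `c` after deleting that edge. -/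
private lemma path_avoids {G : SimpleGraph V} [DecidableEq V] {a c z : V}
    (hr : ¬(G.deleteEdges {s(a, c)}).Reachable c z)
    (p : G.Walk a z) (hp : p.IsPath) : s(a, c) ∉ p.edges := by
  intro h
  obtain ⟨q, hq⟩ := drop_edge p hp h
  exact hr ⟨q.toDeleteEdge _ hq⟩

/-- if x ∈ A and y ∈ B with d_{T'}(x,y) = ecc_{T'}(y), then
ecc_T(x) > ecc_{T'}(y). -/
theorem stmt2 [Fintype V] [DecidableEq V] (T : SimpleGraph V) (hT : T.IsTree)
    (v u w : V) (hvu : T.Adj v u)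
    (hw : (T.deleteEdges {s(v, u)}).Reachable u w)
    (T' : SimpleGraph V) (hT't : T'.IsTree)
    (hT'edges : T'.edgeSet = (T.edgeSet \ {s(v, u)}) ∪ {s(v, w)})
    (himp : ecc T' v < ecc T v)
    (x y : V)
    (hx : (T.deleteEdges {s(v, u)}).Reachable v x)
    (hy : (T.deleteEdges {s(v, u)}).Reachable u y)
    (hd : T'.dist x y = ecc T' y) :
    ecc T' y < ecc T x := by
  have hbridge : ¬(T.deleteEdges {s(v, u)}).Reachable v u :=
    (isBridge_iff.mp ((isAcyclic_iff_forall_adj_isBridge.mp hT.IsAcyclic) hvu))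
  have hle1 : T.deleteEdges {s(v, u)} ≤ T' := by
    rw [← edgeSet_subset_edgeSet, edgeSet_deleteEdges, hT'edges]
    exact Set.subset_union_left
  have hle2 : T'.deleteEdges {s(v, w)} ≤ T.deleteEdges {s(v, u)} := by
    rw [← edgeSet_subset_edgeSet, edgeSet_deleteEdges, edgeSet_deleteEdges, hT'edges]
    intro e he
    simp only [Set.mem_diff, Set.mem_union, Set.mem_singleton_iff] at *
    tauto
  have hnxy : ¬(T.deleteEdges {s(v, u)}).Reachable x y := fun r =>
    hbridge (hx.trans (r.trans hy.symm))
  have hnxy' : ¬(T'.deleteEdges {s(v, w)}).Reachable x y := fun r => hnxy (r.mono hle2)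
  -- choose b realizing ecc T v
  obtain ⟨b, -, hb⟩ := Finset.exists_mem_eq_sup (Finset.univ : Finset V)
    ⟨v, Finset.mem_univ v⟩ (fun z => T.dist v z)
  replace hb : ecc T v = T.dist v b := hb
  -- b is on the u-side of T - vu
  have hvb : ¬(T.deleteEdges {s(v, u)}).Reachable v b := by
    intro hr
    have hwb : ¬(T'.deleteEdges {s(v, w)}).Reachable w b := fun r =>
      hbridge ((hr.trans (r.mono hle2).symm).trans hw.symm)
    obtain ⟨p, hp⟩ := (hT't.isConnected).exists_walk_length_eq_dist v b
    have havoid := path_avoids hwb p (p.isPath_of_length_eq_dist hp)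
    have hsub : ∀ e ∈ p.edges, e ∈ T.edgeSet := by
      intro e he
      have hmem := p.edges_subset_edgeSet he
      rw [hT'edges] at hmem
      rcases hmem with h' | h'
      · exact h'.1
      · rw [Set.mem_singleton_iff] at h'
        exact absurd (h' ▸ he) havoid
    have h1 : T.dist v b ≤ T'.dist v b := by
      have := SimpleGraph.dist_le (p.transfer T hsub)
      rwa [Walk.length_transfer, hp] at this
    have h2 : T'.dist v b ≤ ecc T' v := dist_le_ecc T' v b
    omega
  have hub : (T.deleteEdges {s(v, u)}).Reachable u b := by
    obtain ⟨p, hp⟩ := (hT.isConnected).exists_walk_length_eq_dist v b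
    obtain ⟨q, hq⟩ := drop_edge p (p.isPath_of_length_eq_dist hp)
      (edge_mem_of_not_reachable hvb p)
    exact ⟨q.toDeleteEdge _ hq⟩
  -- distance in T' splits at v
  have h1 : T'.dist x y = T'.dist x v + T'.dist v y := by
    obtain ⟨p, hp⟩ := (hT't.isConnected).exists_walk_length_eq_dist x y
    exact dist_split_s2 p hp
      (p.fst_mem_support_of_mem_edges (edge_mem_of_not_reachable hnxy' p))
  -- distance x to v does not increase
  have h2 : T'.dist x v ≤ T.dist x v := by
    obtain ⟨q, hq⟩ := (hT.isConnected).exists_walk_length_eq_dist x v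
    have hnux : ¬(T.deleteEdges {s(v, u)}).Reachable u x := fun r =>
      hbridge (hx.trans r.symm)
    have havoid : s(v, u) ∉ q.reverse.edges :=
      path_avoids hnux q.reverse (q.isPath_of_length_eq_dist hq).reverse
    have havoid' : s(v, u) ∉ q.edges := fun h =>
      havoid (by rw [Walk.edges_reverse]; exact List.mem_reverse.mpr h)
    have hsub : ∀ e ∈ q.edges, e ∈ T'.edgeSet := by
      intro e he
      rw [hT'edges]
      exact Or.inl ⟨q.edges_subset_edgeSet he, fun h => havoid' (h ▸ he)⟩
    have := SimpleGraph.dist_le (q.transfer T' hsub)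
    rwa [Walk.length_transfer, hq] at this
  -- distance in T splits at v
  have h3 : T.dist x b = T.dist x v + T.dist v b := by
    have hnxb : ¬(T.deleteEdges {s(v, u)}).Reachable x b := fun r =>
      hbridge (hx.trans (r.trans hub.symm))
    obtain ⟨p, hp⟩ := (hT.isConnected).exists_walk_length_eq_dist x b
    exact dist_split_s2 p hp
      (p.fst_mem_support_of_mem_edges (edge_mem_of_not_reachable hnxb p))
  calc ecc T' y = T'.dist x y := hd.symm
    _ = T'.dist x v + T'.dist v y := h1
    _ ≤ T.dist x v + ecc T' v := Nat.add_le_add h2 (dist_le_ecc T' v y)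
    _ < T.dist x v + ecc T v := Nat.add_lt_add_left himp _
    _ = T.dist x v + T.dist v b := by rw [hb]
    _ = T.dist x b := h3.symm
    _ ≤ ecc T x := dist_le_ecc T x b

end NCG
end

section
/- For the Max Swap Game on trees, the lexicographically sorted (descending) vector of vertex eccentricities is a generalized ordinal potential: if a vertex v performs a swap in tree T producing tree T' with ecc_{T'}(v) < ecc_T(v), then the sorted eccentricity vector of T' is strictly lexicographically smaller than that of T. -/
namespace NCG
open SimpleGraph

section ListLemmas


lemma sorted_desc_get_le {l : List ℕ} (hs : l.Pairwise (fun a b => b ≤ a))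
    {i j : ℕ} (hij : i ≤ j) (hj : j < l.length) :
    l.get ⟨j, hj⟩ ≤ l.get ⟨i, lt_of_le_of_lt hij hj⟩ := by
  rcases eq_or_lt_of_le hij with rfl | h
  · exact le_refl _
  · exact List.pairwise_iff_get.1 hs ⟨i, _⟩ ⟨j, _⟩ h

lemma desc_get_iff {l : List ℕ} (hs : l.Pairwise (fun a b => b ≤ a))
    {j : ℕ} (hj : j < l.length) (t : ℕ) :
    t ≤ l.get ⟨j, hj⟩ ↔ j < l.countP (fun a => decide (t ≤ a)) := by
  induction l generalizing j with
  | nil => simp at hj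
  | cons a l ih =>
    have hs' : l.Pairwise (fun a b => b ≤ a) := hs.of_cons
    cases j with
    | zero =>
      have hget : (a :: l).get ⟨0, hj⟩ = a := rfl
      rw [hget, List.countP_cons]
      by_cases hta : t ≤ a
      · simp [hta]
      · simp only [decide_eq_false hta, if_neg, Bool.false_eq_true, not_false_eq_true,
          add_zero]
        constructor
        · intro h; omega
        · intro h
          exfalso
          obtain ⟨b, hb, htb⟩ := List.countP_pos_iff.1 h
          simp only [decide_eq_true_eq] at htb
          have : b ≤ a := (List.pairwise_cons.1 hs).1 b hb
          omega
    | succ j =>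
      simp only [List.length_cons, Nat.succ_lt_succ_iff] at hj
      have hget : (a :: l).get ⟨j + 1, by simpa using hj⟩ = l.get ⟨j, hj⟩ := rfl
      rw [List.countP_cons]
      by_cases hta : t ≤ a
      · simp only [decide_eq_true hta, if_pos]
        rw [show ((a :: l).get ⟨j + 1, _⟩) = l.get ⟨j, hj⟩ from rfl, ih hs' hj]
        omega
      · simp only [decide_eq_false hta, if_neg, Bool.false_eq_true, not_false_eq_true, add_zero]
        rw [show ((a :: l).get ⟨j + 1, _⟩) = l.get ⟨j, hj⟩ from rfl]
        constructor
        · intro h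
          exfalso
          have : l.get ⟨j, hj⟩ ≤ a := (List.pairwise_cons.1 hs).1 _ (l.get_mem _)
          omega
        · intro h
          have : j < List.countP (fun a => decide (t ≤ a)) l := by omega
          exact (ih hs' hj).2 this

lemma lex_of_get : ∀ (i : ℕ) (l l' : List ℕ) (hi : i < l.length) (hi' : i < l'.length),
    (∀ j (hj : j < i), l'.get ⟨j, lt_trans hj hi'⟩ ≤ l.get ⟨j, lt_trans hj hi⟩) →
    l'.get ⟨i, hi'⟩ < l.get ⟨i, hi⟩ → List.Lex (· < ·) l' l := by
  intro i
  induction i with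
  | zero =>
    intro l l' hi hi' _ hlt
    match l, l' with
    | a :: t, a' :: t' =>
      exact List.Lex.rel hlt
  | succ i ih =>
    intro l l' hi hi' hle hlt
    match l, l' with
    | a :: t, a' :: t' =>
      have h0 : a' ≤ a := by
        have := hle 0 (Nat.succ_pos i)
        simpa using this
      rcases lt_or_eq_of_le h0 with h | rfl
      · exact List.Lex.rel h
      · refine List.Lex.cons ?_
        simp only [List.length_cons, Nat.succ_lt_succ_iff] at hi hi'
        refine ih t t' hi hi' ?_ ?_
        · intro j hj
          have := hle (j+1) (Nat.succ_lt_succ hj)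
          simpa using this
        · simpa using hlt

variable {α : Type*} [Fintype α] [DecidableEq α]

omit [DecidableEq α] in
lemma countP_sortDesc (f : α → ℕ) (t : ℕ) :
    (((Finset.univ.val.map f).sort (· ≤ ·)).reverse).countP (fun a => decide (t ≤ a))
      = (Finset.univ.filter (fun x => t ≤ f x)).card := by
  rw [List.countP_reverse]
  have h1 : ((Finset.univ.val.map f).sort (· ≤ ·) : Multiset ℕ) = Finset.univ.val.map f :=
    Multiset.sort_eq _ _
  have h2 : Multiset.countP (fun a => t ≤ a) ((Finset.univ.val.map f).sort (· ≤ ·) : Multiset ℕ)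
      = Multiset.countP (fun a => t ≤ a) (Finset.univ.val.map f) := by rw [h1]
  rw [Multiset.coe_countP] at h2
  rw [h2, Multiset.countP_map]
  rw [Finset.card, Finset.filter_val]

omit [DecidableEq α] in
lemma length_sortDesc (f : α → ℕ) :
    (((Finset.univ.val.map f).sort (· ≤ ·)).reverse).length = Fintype.card α := by
  simp [Multiset.length_sort]

omit [DecidableEq α] in
lemma sorted_sortDesc (f : α → ℕ) :
    (((Finset.univ.val.map f).sort (· ≤ ·)).reverse).Pairwise (fun a b => b ≤ a) := by
  rw [List.pairwise_reverse]
  exact Multiset.pairwise_sort _ _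

lemma lex_main (f g : α → ℕ) (A : ℕ) (h1 : ∀ x, A ≤ g x → g x ≤ f x)
    (z : α) (hz1 : A ≤ f z) (hz2 : g z < A) :
    List.Lex (· < ·) (((Finset.univ.val.map g).sort (· ≤ ·)).reverse)
      (((Finset.univ.val.map f).sort (· ≤ ·)).reverse) := by
  classical
  have cmono : ∀ t, A ≤ t →
      (Finset.univ.filter (fun x => t ≤ g x)).card ≤ (Finset.univ.filter (fun x => t ≤ f x)).card := by
    intro t hAt
    apply Finset.card_le_card
    intro x hx
    simp only [Finset.mem_filter, Finset.mem_univ, true_and] at hx ⊢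
    exact le_trans hx (h1 x (le_trans hAt hx))
  set i := (Finset.univ.filter (fun x => A ≤ g x)).card with hidef
  have hcfA : i + 1 ≤ (Finset.univ.filter (fun x => A ≤ f x)).card := by
    have hss : (Finset.univ.filter (fun x => A ≤ g x)) ⊂ (Finset.univ.filter (fun x => A ≤ f x)) := by
      constructor
      · intro x hx
        simp only [Finset.mem_filter, Finset.mem_univ, true_and] at hx ⊢
        exact le_trans hx (h1 x hx)
      · intro hsub
        have := hsub (Finset.mem_filter.2 ⟨Finset.mem_univ z, hz1⟩)
        simp only [Finset.mem_filter, Finset.mem_univ, true_and] at this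
        omega
    exact Finset.card_lt_card hss
  have hlenf : (((Finset.univ.val.map f).sort (· ≤ ·)).reverse).length = Fintype.card α :=
    length_sortDesc f
  have hleng : (((Finset.univ.val.map g).sort (· ≤ ·)).reverse).length = Fintype.card α :=
    length_sortDesc g
  have hcard : (Finset.univ.filter (fun x => A ≤ f x)).card ≤ Fintype.card α :=
    le_trans (Finset.card_le_card (Finset.filter_subset _ _)) (le_of_eq (Finset.card_univ))
  have hif : i < (((Finset.univ.val.map f).sort (· ≤ ·)).reverse).length := by omega
  have hig : i < (((Finset.univ.val.map g).sort (· ≤ ·)).reverse).length := by omega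
  refine lex_of_get i _ _ hif hig ?_ ?_
  · intro j hj
    set t := (((Finset.univ.val.map g).sort (· ≤ ·)).reverse).get ⟨j, lt_trans hj hig⟩ with ht
    have hAt : A ≤ t := by
      rw [ht, desc_get_iff (sorted_sortDesc g) (lt_trans hj hig), countP_sortDesc]
      omega
    have hjc : j < (((Finset.univ.val.map g).sort (· ≤ ·)).reverse).countP (fun a => decide (t ≤ a)) :=
      (desc_get_iff (sorted_sortDesc g) (lt_trans hj hig) t).1 (le_refl t)
    rw [countP_sortDesc] at hjc
    have hjf : j < (Finset.univ.filter (fun x => t ≤ f x)).card := lt_of_lt_of_le hjc (cmono t hAt)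
    exact (desc_get_iff (sorted_sortDesc f) (lt_trans hj hif) t).2
      (by rw [countP_sortDesc]; exact hjf)
  · have hfA : A ≤ (((Finset.univ.val.map f).sort (· ≤ ·)).reverse).get ⟨i, hif⟩ := by
      rw [desc_get_iff (sorted_sortDesc f) hif, countP_sortDesc]
      omega
    have hgA : ¬ A ≤ (((Finset.univ.val.map g).sort (· ≤ ·)).reverse).get ⟨i, hig⟩ := by
      rw [desc_get_iff (sorted_sortDesc g) hig, countP_sortDesc]
      omega
    omega


end ListLemmas

section GraphLemmas

variable {V : Type*}


lemma path_split {G : SimpleGraph V} {v u' : V} :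
    ∀ {a b : V} (p : G.Walk a b), p.IsPath → s(v, u') ∈ p.edges →
      ((G.deleteEdges {s(v, u')}).Reachable a v ∧ (G.deleteEdges {s(v, u')}).Reachable u' b) ∨
      ((G.deleteEdges {s(v, u')}).Reachable a u' ∧ (G.deleteEdges {s(v, u')}).Reachable v b) := by
  intro a b p
  induction p with
  | nil => simp
  | @cons a c b h p ih =>
    intro hp he
    by_cases hac : s(a, c) = s(v, u')
    · have hnotin : s(v, u') ∉ p.edges := by
        intro hmem
        have hcons := (SimpleGraph.Walk.cons_isPath_iff h p).1 hp
        rcases Sym2.eq_iff.1 hac with ⟨rfl, rfl⟩ | ⟨rfl, rfl⟩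
        · exact hcons.2 (p.fst_mem_support_of_mem_edges hmem)
        · exact hcons.2 (p.snd_mem_support_of_mem_edges hmem)
      have hsub : ∀ e ∈ p.edges, e ∈ (G.deleteEdges {s(v, u')}).edgeSet := by
        intro e hmem
        rw [edgeSet_deleteEdges]
        exact ⟨p.edges_subset_edgeSet hmem, by rintro rfl; exact hnotin hmem⟩
      have rcb : (G.deleteEdges {s(v, u')}).Reachable c b := ⟨p.transfer _ hsub⟩
      rcases Sym2.eq_iff.1 hac with ⟨rfl, rfl⟩ | ⟨rfl, rfl⟩
      · exact Or.inl ⟨Reachable.refl _, rcb⟩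
      · exact Or.inr ⟨Reachable.refl _, rcb⟩
    · have he' : s(v, u') ∈ p.edges := by
        rcases List.mem_cons.1 he with h' | h'
        · exact absurd h'.symm hac
        · exact h'
      have rac : (G.deleteEdges {s(v, u')}).Reachable a c :=
        (SimpleGraph.deleteEdges_adj.2 ⟨h, by simpa using hac⟩).reachable
      rcases ih ((SimpleGraph.Walk.cons_isPath_iff h p).1 hp).1 he' with ⟨h1, h2⟩ | ⟨h1, h2⟩
      · exact Or.inl ⟨rac.trans h1, h2⟩
      · exact Or.inr ⟨rac.trans h1, h2⟩

lemma dist_eq_of_reachable_delete {G : SimpleGraph V} {v u' : V}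
    (hbr : ¬ (G.deleteEdges {s(v, u')}).Reachable v u')
    {a b : V} (hr : (G.deleteEdges {s(v, u')}).Reachable a b) :
    G.dist a b = (G.deleteEdges {s(v, u')}).dist a b := by
  apply le_antisymm
  · obtain ⟨p, hp, hlen⟩ := hr.exists_path_of_dist
    calc G.dist a b ≤ (p.mapLe (SimpleGraph.deleteEdges_le _)).length := SimpleGraph.dist_le _
    _ = p.length := SimpleGraph.Walk.length_map _ _
    _ = _ := hlen
  · have hrG : G.Reachable a b := hr.mono (SimpleGraph.deleteEdges_le _)
    obtain ⟨p, hp, hlen⟩ := hrG.exists_path_of_dist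
    have hnotin : s(v, u') ∉ p.edges := by
      intro hmem
      rcases path_split p hp hmem with ⟨h1, h2⟩ | ⟨h1, h2⟩
      · exact hbr (h1.symm.trans (hr.trans h2.symm))
      · exact hbr (h2.trans (hr.symm.trans h1))
    have hsub : ∀ e ∈ p.edges, e ∈ (G.deleteEdges {s(v, u')}).edgeSet := by
      intro e hmem
      rw [edgeSet_deleteEdges]
      exact ⟨p.edges_subset_edgeSet hmem, by rintro rfl; exact hnotin hmem⟩
    calc (G.deleteEdges {s(v, u')}).dist a b ≤ (p.transfer _ hsub).length :=
          SimpleGraph.dist_le _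
    _ = p.length := SimpleGraph.Walk.length_transfer _ _
    _ = _ := hlen

lemma cross_ge {G : SimpleGraph V} {v u' : V} (hconn : G.Connected)
    (hbr : ¬ (G.deleteEdges {s(v, u')}).Reachable v u') :
    ∀ {a b : V} (p : G.Walk a b),
      (G.deleteEdges {s(v, u')}).Reachable a v → (G.deleteEdges {s(v, u')}).Reachable u' b →
      G.dist a v + 1 + G.dist u' b ≤ p.length := by
  intro a b p
  induction p with
  | nil =>
    intro rav ru'b
    exact absurd (rav.symm.trans ru'b.symm) hbr
  | @cons a c b h p ih =>
    intro rav ru'b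
    by_cases hac : s(a, c) = s(v, u')
    · rcases Sym2.eq_iff.1 hac with ⟨rfl, rfl⟩ | ⟨rfl, rfl⟩
      · rw [SimpleGraph.dist_self]
        have := SimpleGraph.dist_le p
        simp only [SimpleGraph.Walk.length_cons]
        omega
      · exact absurd rav.symm hbr
    · have rac : (G.deleteEdges {s(v, u')}).Reachable a c :=
        (SimpleGraph.deleteEdges_adj.2 ⟨h, by simpa using hac⟩).reachable
      have ihc := ih (rac.symm.trans rav) ru'b
      have h1 : G.dist a v ≤ 1 + G.dist c v := by
        have htri : G.dist a v ≤ G.dist a c + G.dist c v := hconn.dist_triangle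
        have hac1 : G.dist a c ≤ 1 := by
          simpa using SimpleGraph.dist_le (SimpleGraph.Walk.cons h SimpleGraph.Walk.nil)
        omega
      simp only [SimpleGraph.Walk.length_cons]
      omega

lemma cross_dist {G : SimpleGraph V} {v u' : V} (hconn : G.Connected) (hvu : G.Adj v u')
    (hbr : ¬ (G.deleteEdges {s(v, u')}).Reachable v u')
    {a b : V} (hav : (G.deleteEdges {s(v, u')}).Reachable a v)
    (hu'b : (G.deleteEdges {s(v, u')}).Reachable u' b) :
    G.dist a b = G.dist a v + 1 + G.dist u' b := by
  have hdvu : G.dist v u' = 1 := by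
    apply le_antisymm
    · simpa using SimpleGraph.dist_le (SimpleGraph.Walk.cons hvu SimpleGraph.Walk.nil)
    · exact hconn.pos_dist_of_ne hvu.ne
  apply le_antisymm
  · calc G.dist a b ≤ G.dist a v + G.dist v b := hconn.dist_triangle
    _ ≤ G.dist a v + (G.dist v u' + G.dist u' b) := by
        have := hconn.dist_triangle (u := v) (v := u') (w := b)
        omega
    _ = G.dist a v + 1 + G.dist u' b := by omega
  · obtain ⟨p, _, hlen⟩ := hconn.exists_path_of_dist a b
    rw [← hlen]
    exact cross_ge hconn hbr p hav hu'b

lemma side_total {G : SimpleGraph V} {v u' : V} (hconn : G.Connected) (x : V) :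
    (G.deleteEdges {s(v, u')}).Reachable x v ∨ (G.deleteEdges {s(v, u')}).Reachable x u' := by
  have key : ∀ {y z : V} (_ : G.Walk y z),
      ((G.deleteEdges {s(v, u')}).Reachable y v ∨ (G.deleteEdges {s(v, u')}).Reachable y u') →
      ((G.deleteEdges {s(v, u')}).Reachable z v ∨ (G.deleteEdges {s(v, u')}).Reachable z u') := by
    intro y z p
    induction p with
    | nil => exact id
    | @cons a c b h p ih =>
      intro hside
      apply ih
      by_cases hac : s(a, c) = s(v, u')
      · rcases Sym2.eq_iff.1 hac with ⟨rfl, rfl⟩ | ⟨rfl, rfl⟩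
        · exact Or.inr (Reachable.refl _)
        · exact Or.inl (Reachable.refl _)
      · have rac : (G.deleteEdges {s(v, u')}).Reachable a c :=
          (SimpleGraph.deleteEdges_adj.2 ⟨h, by simpa using hac⟩).reachable
        rcases hside with h' | h'
        · exact Or.inl (rac.symm.trans h')
        · exact Or.inr (rac.symm.trans h')
  obtain ⟨p⟩ := hconn.preconnected v x
  exact key p (Or.inl (Reachable.refl _))


end GraphLemmas

variable {V : Type*}

/-- The eccentricities of all vertices, sorted in non-increasing order. -/
noncomputable def sortedEcc [Fintype V] (G : SimpleGraph V) : List ℕ :=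
  ((Finset.univ.val.map (ecc G)).sort (· ≤ ·)).reverse

/-- the descending sorted eccentricity vector is a generalized
ordinal potential for the Max Swap Game on trees: an improving swap makes it
strictly lexicographically smaller. -/

theorem stmt9 [Fintype V] [DecidableEq V] (T T' : SimpleGraph V)
    (hT : T.IsTree) (hT't : T'.IsTree)
    (v u w : V) (hvu : T.Adj v u)
    (hT'edges : T'.edgeSet = (T.edgeSet \ {s(v, u)}) ∪ {s(v, w)})
    (himp : ecc T' v < ecc T v) :
    List.Lex (· < ·) (sortedEcc T') (sortedEcc T) := by
  classical
  have hTconn : T.Connected := hT.isConnected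
  have hT'conn : T'.Connected := hT't.isConnected
  by_cases hwu : w = u
  · subst hwu
    have hTT' : T' = T := by
      apply SimpleGraph.edgeSet_inj.1
      rw [hT'edges, Set.diff_union_self]
      exact Set.union_eq_self_of_subset_right (by simpa using hvu)
    rw [hTT'] at himp
    exact absurd himp (lt_irrefl _)
  have hvT'adj : T'.Adj v w := by
    rw [← SimpleGraph.mem_edgeSet, hT'edges]
    exact Or.inr rfl
  have hsvw_ne : s(v, w) ≠ s(v, u) := by
    intro h
    rcases Sym2.eq_iff.1 h with ⟨_, h2⟩ | ⟨h1, _⟩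
    · exact hwu h2
    · exact hvu.ne h1
  have hbrT : ¬ (T.deleteEdges {s(v, u)}).Reachable v u := by
    have hb := (SimpleGraph.isAcyclic_iff_forall_adj_isBridge.1 hT.IsAcyclic) hvu
    exact SimpleGraph.isBridge_iff.1 hb
  have hnotT : s(v, w) ∉ T.edgeSet := by
    intro hmem
    have hT'eq : T' = T.deleteEdges {s(v, u)} := by
      apply SimpleGraph.edgeSet_inj.1
      rw [hT'edges, edgeSet_deleteEdges]
      apply Set.union_eq_self_of_subset_right
      intro e he
      rcases he with rfl
      exact ⟨hmem, by simpa using hsvw_ne⟩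
    exact hbrT (by rw [← hT'eq]; exact hT'conn.preconnected v u)
  have hG0eq : T'.deleteEdges {s(v, w)} = T.deleteEdges {s(v, u)} := by
    apply SimpleGraph.edgeSet_inj.1
    rw [edgeSet_deleteEdges, edgeSet_deleteEdges, hT'edges]
    ext e
    simp only [Set.mem_diff, Set.mem_union, Set.mem_singleton_iff]
    constructor
    · rintro ⟨h1 | rfl, h2⟩
      · exact h1
      · exact absurd rfl h2
    · rintro ⟨h1, h2⟩
      refine ⟨Or.inl ⟨h1, h2⟩, ?_⟩
      rintro rfl
      exact hnotT h1
  have hbrT'G0 : ¬ (T.deleteEdges {s(v, u)}).Reachable v w := by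
    have hb := (SimpleGraph.isAcyclic_iff_forall_adj_isBridge.1 hT't.IsAcyclic) hvT'adj
    have h2 := SimpleGraph.isBridge_iff.1 hb
    rwa [hG0eq] at h2
  have hbrT'2 : ¬ (T'.deleteEdges {s(v, w)}).Reachable v w := by
    rw [hG0eq]; exact hbrT'G0
  -- sides
  have hside : ∀ x, (T.deleteEdges {s(v, u)}).Reachable x v ∨
      (T.deleteEdges {s(v, u)}).Reachable x u := fun x => side_total hTconn x
  have hwside : (T.deleteEdges {s(v, u)}).Reachable w u := by
    rcases hside w with h | h
    · exact absurd h.symm hbrT'G0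
    · exact h
  -- distance transfer lemmas
  have hsame : ∀ a b, (T.deleteEdges {s(v, u)}).Reachable a b → T.dist a b = T'.dist a b := by
    intro a b hr
    rw [dist_eq_of_reachable_delete hbrT hr]
    have hr2 : (T'.deleteEdges {s(v, w)}).Reachable a b := by rw [hG0eq]; exact hr
    rw [dist_eq_of_reachable_delete hbrT'2 hr2, hG0eq]
  have crossT : ∀ a b, (T.deleteEdges {s(v, u)}).Reachable a v →
      (T.deleteEdges {s(v, u)}).Reachable b u →
      T.dist a b = T.dist a v + 1 + T.dist u b :=
    fun a b ha hb => cross_dist hTconn hvu hbrT ha hb.symm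
  have crossT' : ∀ a b, (T.deleteEdges {s(v, u)}).Reachable a v →
      (T.deleteEdges {s(v, u)}).Reachable b u →
      T'.dist a b = T'.dist a v + 1 + T'.dist w b := by
    intro a b ha hb
    have ha2 : (T'.deleteEdges {s(v, w)}).Reachable a v := by rw [hG0eq]; exact ha
    have hb2 : (T'.deleteEdges {s(v, w)}).Reachable w b := by
      rw [hG0eq]; exact hwside.trans hb.symm
    exact cross_dist hT'conn hvT'adj hbrT'2 ha2 hb2
  -- eccentricity helpers
  have eccle : ∀ (G : SimpleGraph V) (x y : V), G.dist x y ≤ ecc G x :=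
    fun G x y => Finset.le_sup (Finset.mem_univ y)
  have eccsup : ∀ (G : SimpleGraph V) (x : V) (c : ℕ), (∀ y, G.dist x y ≤ c) → ecc G x ≤ c :=
    fun G x c h => Finset.sup_le (fun y _ => h y)
  have eccattain : ∀ (G : SimpleGraph V) (x : V), ∃ y, ecc G x = G.dist x y := by
    intro G x
    obtain ⟨y, _, h⟩ := Finset.exists_mem_eq_sup Finset.univ ⟨v, Finset.mem_univ v⟩
      (fun y => G.dist x y)
    exact ⟨y, h⟩
  -- the far vertex y* from v
  obtain ⟨ys, hys⟩ := eccattain T v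
  have hysu : (T.deleteEdges {s(v, u)}).Reachable ys u := by
    rcases hside ys with h | h
    · exfalso
      have h1 : T.dist v ys = T'.dist v ys := hsame v ys h.symm
      have h2 : T'.dist v ys ≤ ecc T' v := eccle T' v ys
      omega
    · exact h
  have heq_e : ecc T v = 1 + T.dist u ys := by
    have h1 : T.dist v ys = T.dist v v + 1 + T.dist u ys :=
      crossT v ys (SimpleGraph.Reachable.refl v) hysu
    have h2 : T.dist v v = 0 := SimpleGraph.dist_self
    omega
  -- M: farthest distance from v on v's side
  set M := (Finset.univ.filter (fun x => (T.deleteEdges {s(v, u)}).Reachable x v)).sup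
    (fun x => T.dist v x) with hMdef
  have hMle : ∀ x, (T.deleteEdges {s(v, u)}).Reachable x v → T.dist v x ≤ M := by
    intro x hx
    exact Finset.le_sup (Finset.mem_filter.2 ⟨Finset.mem_univ x, hx⟩)
  obtain ⟨z, hzmem, hzM⟩ := Finset.exists_mem_eq_sup
    (Finset.univ.filter (fun x => (T.deleteEdges {s(v, u)}).Reachable x v))
    ⟨v, Finset.mem_filter.2 ⟨Finset.mem_univ v, SimpleGraph.Reachable.refl v⟩⟩
    (fun x => T.dist v x)
  have hz : (T.deleteEdges {s(v, u)}).Reachable z v := (Finset.mem_filter.1 hzmem).2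
  have he1 : 1 ≤ ecc T v := by
    have h1 : 0 < T.dist v u := hTconn.pos_dist_of_ne hvu.ne
    have h2 : T.dist v u ≤ ecc T v := eccle T v u
    omega
  have hMe : M < ecc T v := by
    have h1 : T.dist v z = T'.dist v z := hsame v z hz.symm
    have h2 : T'.dist v z ≤ ecc T' v := eccle T' v z
    omega
  -- K1: vertices on v's side do not increase
  have K1 : ∀ x, (T.deleteEdges {s(v, u)}).Reachable x v → ecc T' x ≤ ecc T x := by
    intro x hx
    apply eccsup
    intro y
    rcases hside y with hy | hy
    · rw [← hsame x y (hx.trans hy.symm)]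
      exact eccle T x y
    · have h1 : T'.dist x y = T'.dist x v + 1 + T'.dist w y := crossT' x y hx hy
      have h2 : T'.dist v y = T'.dist v v + 1 + T'.dist w y :=
        crossT' v y (SimpleGraph.Reachable.refl v) hy
      have h3 : T'.dist v v = 0 := SimpleGraph.dist_self
      have h4 : T'.dist v y ≤ ecc T' v := eccle T' v y
      have h5 : T'.dist x v = T.dist x v := (hsame x v hx).symm
      have h6 : T.dist x ys ≤ ecc T x := eccle T x ys
      have h7 : T.dist x ys = T.dist x v + 1 + T.dist u ys := crossT x ys hx hysu
      omega
  -- K2: vertices on u's side with large new eccentricity do not increase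
  have K2 : ∀ x, (T.deleteEdges {s(v, u)}).Reachable x u →
      ecc T v + M ≤ ecc T' x → ecc T' x ≤ ecc T x := by
    intro x hx hA
    obtain ⟨y0, hy0⟩ := eccattain T' x
    rcases hside y0 with hy | hy
    · exfalso
      have h1 : T'.dist x y0 = T'.dist y0 x := SimpleGraph.dist_comm
      have h2 : T'.dist y0 x = T'.dist y0 v + 1 + T'.dist w x := crossT' y0 x hy hx
      have h3 : T.dist y0 v = T'.dist y0 v := hsame y0 v hy
      have h4 : T.dist y0 v = T.dist v y0 := SimpleGraph.dist_comm
      have h5 : T.dist v y0 ≤ M := hMle y0 hy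
      have h6 : T'.dist v x = T'.dist v v + 1 + T'.dist w x :=
        crossT' v x (SimpleGraph.Reachable.refl v) hx
      have h7 : T'.dist v v = 0 := SimpleGraph.dist_self
      have h8 : T'.dist v x ≤ ecc T' v := eccle T' v x
      omega
    · rw [hy0, ← hsame x y0 (hx.trans hy.symm)]
      exact eccle T x y0
  -- K3: the far vertex z on v's side has large old eccentricity
  have K3 : ecc T v + M ≤ ecc T z := by
    have h1 : T.dist z ys = T.dist z v + 1 + T.dist u ys := crossT z ys hz hysu
    have h2 : T.dist z v = T.dist v z := SimpleGraph.dist_comm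
    have h3 : T.dist z ys ≤ ecc T z := eccle T z ys
    omega
  -- K4: z's new eccentricity is small
  have K4 : ecc T' z < ecc T v + M := by
    have hb : ecc T' z ≤ ecc T v + M - 1 := by
      apply eccsup
      intro y
      rcases hside y with hy | hy
      · have h1 : T.dist z y = T'.dist z y := hsame z y (hz.trans hy.symm)
        have h2 : T.dist z y ≤ T.dist z v + T.dist v y := hTconn.dist_triangle
        have h3 : T.dist v y ≤ M := hMle y hy
        have h4 : T.dist z v = T.dist v z := SimpleGraph.dist_comm
        omega
      · have h1 : T'.dist z y = T'.dist z v + 1 + T'.dist w y := crossT' z y hz hy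
        have h2 : T'.dist v y = T'.dist v v + 1 + T'.dist w y :=
          crossT' v y (SimpleGraph.Reachable.refl v) hy
        have h3 : T'.dist v v = 0 := SimpleGraph.dist_self
        have h4 : T'.dist v y ≤ ecc T' v := eccle T' v y
        have h5 : T.dist z v = T'.dist z v := hsame z v hz
        have h6 : T.dist z v = T.dist v z := SimpleGraph.dist_comm
        omega
    omega
  -- conclude via the lexicographic lemma
  have hfinal := lex_main (ecc T) (ecc T') (ecc T v + M)
    (by
      intro x hx
      rcases hside x with h | h
      · exact K1 x h
      · exact K2 x h hx)
    z K3 K4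
  exact hfinal

end NCG
end

section
/- In the Max Swap Game on trees, an improving swap never increases the diameter: if v swaps edge vu to vw in tree T producing tree T' with ecc_{T'}(v) < ecc_T(v), then diam(T') ≤ diam(T). -/
namespace NCG
open SimpleGraph

variable {V : Type*}

/-- In a tree, any path between two vertices has length equal to the distance. -/
lemma tree_length_eq_dist {G : SimpleGraph V} (hG : G.IsTree) {a b : V}
    (p : G.Walk a b) (hp : p.IsPath) : p.length = G.dist a b := by
  obtain ⟨q, hq, hql⟩ := hG.isConnected.exists_path_of_dist a b
  rw [(hG.existsUnique_path a b).unique hp hq, hql]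

/-- In a tree, distances split at any vertex on a path. -/
lemma tree_dist_split {G : SimpleGraph V} (hG : G.IsTree) {a b c : V} [DecidableEq V]
    (p : G.Walk a b) (hp : p.IsPath) (hc : c ∈ p.support) :
    G.dist a b = G.dist a c + G.dist c b := by
  have h := congrArg SimpleGraph.Walk.length (p.take_spec hc)
  rw [Walk.length_append] at h
  rw [← tree_length_eq_dist hG p hp, ← h,
    tree_length_eq_dist hG _ (hp.takeUntil hc), tree_length_eq_dist hG _ (hp.dropUntil hc)]

/-- In a tree, a path from `a` through a neighbour `b` of `a` starts with the edge `ab`. -/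
lemma tree_cons_decomp {G : SimpleGraph V} (hG : G.IsTree) {a b c : V} [DecidableEq V]
    (hab : G.Adj a b) (q : G.Walk a c) (hq : q.IsPath) (hb : b ∈ q.support) :
    ∃ q₂ : G.Walk b c, q = Walk.cons hab q₂ ∧ q₂.IsPath ∧ a ∉ q₂.support := by
  have ht : (q.takeUntil b hb).IsPath := hq.takeUntil hb
  have hcons : (Walk.cons hab Walk.nil).IsPath := by simp [hab.ne]
  have heq := (hG.existsUnique_path a b).unique ht hcons
  refine ⟨q.dropUntil b hb, ?_, hq.dropUntil hb, ?_⟩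
  · conv_lhs => rw [← q.take_spec hb]
    rw [heq]
    simp
  · have hspec := q.take_spec hb
    rw [heq, Walk.cons_append, Walk.nil_append] at hspec
    have hq' := hq
    rw [← hspec, Walk.cons_isPath_iff] at hq'
    exact hq'.2

/-- Additivity of distances through `v` when `x` is on the non-`u` side and `y` on
the `u` side. -/
lemma tree_dist_add {G : SimpleGraph V} (hG : G.IsTree) {v u x y : V} [DecidableEq V]
    (hvu : G.Adj v u) (p : G.Walk v x) (hp : p.IsPath) (hup : u ∉ p.support)
    (q : G.Walk v y) (hq : q.IsPath) (huq : u ∈ q.support) :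
    G.dist x y = G.dist x v + G.dist v y := by
  obtain ⟨q₂, hqe, hq₂, hvq₂⟩ := tree_cons_decomp hG hvu q hq huq
  have hdisj : ∀ z ∈ p.support, z ∈ q₂.support → False := by
    intro z hzp hzq
    have hS : (q₂.takeUntil z hzq).IsPath := hq₂.takeUntil hzq
    have hvS : v ∉ (q₂.takeUntil z hzq).support :=
      fun h => hvq₂ (q₂.support_takeUntil_subset hzq h)
    have hcons : (Walk.cons hvu (q₂.takeUntil z hzq)).IsPath := hS.cons hvS
    have hPt : (p.takeUntil z hzp).IsPath := hp.takeUntil hzp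
    have heq := (hG.existsUnique_path v z).unique hcons hPt
    have hu : u ∈ (Walk.cons hvu (q₂.takeUntil z hzq)).support := by
      rw [Walk.support_cons]
      exact List.mem_cons_of_mem _ (Walk.start_mem_support _)
    rw [heq] at hu
    exact hup (p.support_takeUntil_subset hzp hu)
  have hW : (p.reverse.append q).IsPath := by
    rw [Walk.isPath_def, Walk.support_append, Walk.support_reverse, hqe,
      Walk.support_cons, List.tail_cons]
    refine List.Nodup.append (List.nodup_reverse.mpr hp.support_nodup) hq₂.support_nodup ?_
    intro z hz1 hz2
    exact hdisj z (List.mem_reverse.mp hz1) hz2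
  have hlen := tree_length_eq_dist hG _ hW
  rw [Walk.length_append, Walk.length_reverse,
    tree_length_eq_dist hG p hp, tree_length_eq_dist hG q hq] at hlen
  rw [← hlen, SimpleGraph.dist_comm (u := x) (v := v)]

/-- an improving swap never increases the diameter of a tree. -/
theorem stmt10 [Fintype V] [DecidableEq V] (T T' : SimpleGraph V)
    (hT : T.IsTree) (hT't : T'.IsTree)
    (v u w : V) (hvu : T.Adj v u)
    (hT'edges : T'.edgeSet = (T.edgeSet \ {s(v, u)}) ∪ {s(v, w)})
    (himp : ecc T' v < ecc T v) :
    diam T' ≤ diam T := by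
  classical
  have hTc := hT.isConnected
  have hT'c := hT't.isConnected
  -- u ≠ w
  have huw : u ≠ w := by
    rintro rfl
    have hTT : T' = T := by
      rw [← edgeSet_inj, hT'edges, Set.diff_union_self,
        Set.union_eq_left.mpr (by simpa using hvu)]
    rw [hTT] at himp
    exact lt_irrefl _ himp
  have hvw' : T'.Adj v w := by
    rw [← SimpleGraph.mem_edgeSet, hT'edges]
    exact Or.inr rfl
  have hsvu_ne_svw : s(v, u) ≠ s(v, w) := fun h => huw (Sym2.congr_right.mp h)
  -- s(v,w) is not an edge of T
  have hsvw_not_T : s(v, w) ∉ T.edgeSet := by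
    intro hmem
    have hbr := (isAcyclic_iff_forall_adj_isBridge.mp hT.IsAcyclic) hvu
    obtain ⟨pw⟩ := hT'c.preconnected v u
    have hsub : ∀ e ∈ pw.edges, e ∈ T.edgeSet := by
      intro e he
      have h1 := pw.edges_subset_edgeSet he
      rw [hT'edges] at h1
      rcases h1 with ⟨h2, _⟩ | h2
      · exact h2
      · rw [Set.mem_singleton_iff] at h2; exact h2 ▸ hmem
    have hnotvu : s(v, u) ∉ pw.edges := by
      intro h
      have h1 := pw.edges_subset_edgeSet h
      rw [hT'edges] at h1
      rcases h1 with ⟨_, h2⟩ | h2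
      · exact h2 rfl
      · rw [Set.mem_singleton_iff] at h2; exact hsvu_ne_svw h2
    have : (T \ SimpleGraph.fromEdgeSet {s(v, u)}).Reachable v u :=
      SimpleGraph.reachable_delete_edges_iff_exists_walk.mpr
        ⟨pw.transfer T hsub, by rw [Walk.edges_transfer]; exact hnotvu⟩
    exact (SimpleGraph.isBridge_iff.mp hbr) this
  -- canonical paths from v in T
  choose P hPp hPl using fun z => hTc.exists_path_of_dist v z
  -- transfers of "A-side" paths to T'
  have hPedges : ∀ x, u ∉ (P x).support → ∀ e ∈ (P x).edges, e ∈ T'.edgeSet := by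
    intro x hx e he
    rw [hT'edges]
    left
    refine ⟨(P x).edges_subset_edgeSet he, ?_⟩
    intro hss
    rw [Set.mem_singleton_iff] at hss
    subst hss
    exact hx ((P x).snd_mem_support_of_mem_edges he)
  have hA1 : ∀ x, u ∉ (P x).support → T'.dist v x ≤ T.dist v x := by
    intro x hx
    calc T'.dist v x ≤ ((P x).transfer T' (hPedges x hx)).length := SimpleGraph.dist_le _
      _ = (P x).length := Walk.length_transfer _ _
      _ = T.dist v x := hPl x
  -- B-side: distance through u
  have hB4 : ∀ z, u ∈ (P z).support → T.dist v z = 1 + T.dist u z := by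
    intro z hz
    obtain ⟨q₂, hqe, hq₂, _⟩ := tree_cons_decomp hT hvu (P z) (hPp z) hz
    rw [← hPl z, hqe, Walk.length_cons, tree_length_eq_dist hT q₂ hq₂]
    omega
  -- additivity across the split
  have hL : ∀ x y, u ∉ (P x).support → u ∈ (P y).support →
      T.dist x y = T.dist x v + T.dist v y := by
    intro x y hx hy
    exact tree_dist_add hT hvu (P x) (hPp x) hx (P y) (hPp y) hy
  -- w is on the u-side
  have hwB : u ∈ (P w).support := by
    by_contra hwA
    have h1 : ((P w).transfer T' (hPedges w hwA)).IsPath := (hPp w).transfer _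
    have h2 : (Walk.cons hvw' Walk.nil).IsPath := by simp [hvw'.ne]
    have heq := (hT't.existsUnique_path v w).unique h1 h2
    have : s(v, w) ∈ (P w).edges := by
      rw [← Walk.edges_transfer (P w) (hPedges w hwA), heq]
      simp
    exact hsvw_not_T ((P w).edges_subset_edgeSet this)
  -- A-side distances do not decrease in T'
  have hA2 : ∀ x, u ∉ (P x).support → T.dist v x ≤ T'.dist v x := by
    intro x hx
    obtain ⟨q, hq, hql⟩ := hT'c.exists_path_of_dist v x
    by_cases hwq : s(v, w) ∈ q.edges
    · have hwsup : w ∈ q.support := q.snd_mem_support_of_mem_edges hwq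
      obtain ⟨q₂, hqe, hq₂, hvq₂⟩ := tree_cons_decomp hT't hvw' q hq hwsup
      have hnv : s(v, w) ∉ q₂.edges := fun h => hvq₂ (q₂.fst_mem_support_of_mem_edges h)
      have hsub : ∀ e ∈ q₂.edges, e ∈ T.edgeSet := by
        intro e he
        have h1 := q₂.edges_subset_edgeSet he
        rw [hT'edges] at h1
        rcases h1 with ⟨h2, _⟩ | h2
        · exact h2
        · rw [Set.mem_singleton_iff] at h2; subst h2; exact absurd he hnv
      have hdwx : T.dist w x ≤ q₂.length := by
        simpa [Walk.length_transfer] using SimpleGraph.dist_le (q₂.transfer T hsub)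
      have hxw := hL x w hx hwB
      calc T.dist v x = T.dist x v := SimpleGraph.dist_comm
        _ ≤ T.dist x w := by rw [hxw]; exact Nat.le_add_right _ _
        _ = T.dist w x := SimpleGraph.dist_comm
        _ ≤ q₂.length := hdwx
        _ ≤ q.length := by rw [hqe, Walk.length_cons]; omega
        _ = T'.dist v x := hql
    · have hsub : ∀ e ∈ q.edges, e ∈ T.edgeSet := by
        intro e he
        have h1 := q.edges_subset_edgeSet he
        rw [hT'edges] at h1
        rcases h1 with ⟨h2, _⟩ | h2
        · exact h2
        · rw [Set.mem_singleton_iff] at h2; subst h2; exact absurd he hwq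
      calc T.dist v x ≤ (q.transfer T hsub).length := SimpleGraph.dist_le _
        _ = q.length := Walk.length_transfer _ _
        _ = T'.dist v x := hql
  -- a vertex attaining the eccentricity of v in T, necessarily on the u-side
  obtain ⟨y0, _, hy0⟩ := Finset.exists_mem_eq_sup (Finset.univ : Finset V)
    ⟨v, Finset.mem_univ v⟩ (fun y => T.dist v y)
  have hy0e : ecc T v = T.dist v y0 := hy0
  have hy0B : u ∈ (P y0).support := by
    by_contra hy0A
    have h1 : T.dist v y0 ≤ T'.dist v y0 := hA2 y0 hy0A
    have h2 : T'.dist v y0 ≤ ecc T' v := Finset.le_sup (Finset.mem_univ y0)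
    omega
  -- key bound for A-side vertices
  have hAbound : ∀ x, u ∉ (P x).support → T.dist x v + ecc T v ≤ diam T := by
    intro x hx
    have hadd := hL x y0 hx hy0B
    have h1 : T.dist x y0 ≤ ecc T x := Finset.le_sup (Finset.mem_univ y0)
    have h2 : ecc T x ≤ diam T := Finset.le_sup (Finset.mem_univ x)
    omega
  -- eccentricity bounds
  have heccv : ∀ z, T'.dist v z ≤ ecc T' v := fun z => Finset.le_sup (Finset.mem_univ z)
  -- the main pairwise bound
  have hmain : ∀ x y, T'.dist x y ≤ diam T := by
    have hAcase : ∀ x y, u ∉ (P x).support → T'.dist x y ≤ diam T := by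
      intro x y hx
      have htri : T'.dist x y ≤ T'.dist x v + T'.dist v y := hT'c.dist_triangle
      have h1 : T'.dist x v ≤ T.dist x v := by
        rw [SimpleGraph.dist_comm]
        calc T'.dist v x ≤ T.dist v x := hA1 x hx
          _ = T.dist x v := SimpleGraph.dist_comm
      have h2 : T'.dist v y ≤ ecc T' v := heccv y
      have h3 := hAbound x hx
      omega
    intro x y
    by_cases hx : u ∈ (P x).support
    · by_cases hy : u ∈ (P y).support
      · -- both on the u-side
        obtain ⟨r, hr, hrl⟩ := hTc.exists_path_of_dist x y
        have hnvu : s(v, u) ∉ r.edges := by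
          intro hmem
          have hvr : v ∈ r.support := r.fst_mem_support_of_mem_edges hmem
          have hsplit := tree_dist_split hT r hr hvr
          have h4x := hB4 x hx
          have h4y := hB4 y hy
          have htri : T.dist x y ≤ T.dist x u + T.dist u y := hTc.dist_triangle
          have e1 : T.dist x v = T.dist v x := SimpleGraph.dist_comm
          have e2 : T.dist x u = T.dist u x := SimpleGraph.dist_comm
          omega
        have hsub : ∀ e ∈ r.edges, e ∈ T'.edgeSet := by
          intro e he
          rw [hT'edges]
          left
          refine ⟨r.edges_subset_edgeSet he, ?_⟩
          intro hss
          rw [Set.mem_singleton_iff] at hss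
          subst hss
          exact hnvu he
        have h1 : T'.dist x y ≤ T.dist x y := by
          calc T'.dist x y ≤ (r.transfer T' hsub).length := SimpleGraph.dist_le _
            _ = r.length := Walk.length_transfer _ _
            _ = T.dist x y := hrl
        have h2 : T.dist x y ≤ ecc T x := Finset.le_sup (Finset.mem_univ y)
        have h3 : ecc T x ≤ diam T := Finset.le_sup (Finset.mem_univ x)
        omega
      · rw [SimpleGraph.dist_comm]
        exact hAcase y x hy
    · exact hAcase x y hx
  -- conclude
  refine Finset.sup_le fun x _ => Finset.sup_le fun y _ => hmain x y

end NCG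
end
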